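/- Let p be a prime and g an integer with p ∤ g. Let f = ∑_{s=0}^{λ} f_s x^s and h = ∑_{s=0}^{λ} h_s x^s have integer coefficients, let B(x, u₁, …, u_m) = ∑_{t=0}^{n} B_t(u₁, …, u_m)·x^t with each B_t an integer-coefficient polynomial in u₁, …, u_m, and set N = n+λ, P = f·B, Q = h·B, P' = P − P₀(u⃗) − P_N(u⃗)·x^N, Q' = Q − Q₀(u⃗) − Q_N(u⃗)·x^N (removing the constant-in-x and degree-N-in-x terms), s₀(x) = f₀·h(x) − h₀·f(x), and s_N(x) = f_λ·h(x) − h_λ·f(x). Then for all integers x₀, u₁, …, u_m one has the congruence (g^{f(x₀)})^{Q'(x₀,u⃗)} ≡ (g^{h(x₀)})^{P'(x₀,u⃗)} · (g^{s₀(x₀)})^{B₀(u⃗)} · (g^{s_N(x₀)})^{B_n(u⃗)·x₀^N} (mod p), where all polynomial values are evaluated over the integers (with negative exponents interpreted via multiplication by the modular inverse of g modulo p, or equivalently the exponents reduced modulo p−1). -/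
import Mathlib


/-- The MPPK DS verification congruence: for a prime `p` and a base `g` with `p ∤ g`,
`(g^{f(x₀)})^{Q'(x₀,u⃗)} ≡ (g^{h(x₀)})^{P'(x₀,u⃗)} · (g^{s₀(x₀)})^{B₀(u⃗)} ·
(g^{s_N(x₀)})^{B_n(u⃗)·x₀^N} (mod p)`, with integer exponents interpreted via `zpow`
in `ZMod p` (negative powers use the modular inverse of `g`). -/
theorem stmt_9 (p : ℕ) [Fact p.Prime] (g : ℤ) (hg : ¬ (p : ℤ) ∣ g)
    (lam n m : ℕ) (fc hc : Fin (lam + 1) → ℤ)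
    (Bc : Fin (n + 1) → MvPolynomial (Fin m) ℤ)
    (x₀ : ℤ) (u : Fin m → ℤ) :
    let N := n + lam
    let Bv : Fin (n + 1) → ℤ := fun t => MvPolynomial.eval u (Bc t)
    let fx : ℤ := ∑ s, fc s * x₀ ^ (s : ℕ)
    let hx : ℤ := ∑ s, hc s * x₀ ^ (s : ℕ)
    let Bx : ℤ := ∑ t, Bv t * x₀ ^ (t : ℕ)
    let P' : ℤ := fx * Bx - fc 0 * Bv 0 - fc (Fin.last lam) * Bv (Fin.last n) * x₀ ^ N
    let Q' : ℤ := hx * Bx - hc 0 * Bv 0 - hc (Fin.last lam) * Bv (Fin.last n) * x₀ ^ N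
    let s0 : ℤ := fc 0 * hx - hc 0 * fx
    let sN : ℤ := fc (Fin.last lam) * hx - hc (Fin.last lam) * fx
    ((g : ZMod p) ^ fx) ^ Q' =
      ((g : ZMod p) ^ hx) ^ P' * ((g : ZMod p) ^ s0) ^ (Bv 0) *
        ((g : ZMod p) ^ sN) ^ (Bv (Fin.last n) * x₀ ^ N) := by
  intro N Bv fx hx Bx P' Q' s0 sN
  have hg' : (g : ZMod p) ≠ 0 := by
    simpa [ZMod.intCast_zmod_eq_zero_iff_dvd] using hg
  rw [← zpow_mul, ← zpow_mul, ← zpow_mul, ← zpow_mul, ← zpow_add₀ hg', ← zpow_add₀ hg']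
  congr 1
  simp only [P', Q', s0, sN]
  ring
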